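/- For all positive real numbers z, A, B and p, q > 1 with 1/p + 1/q = 1, the infimum over λ ≥ z of (A*λ + B/λ^{p/q}) is at most A*z + p^{1/p} * q^{1/q} * A^{1/q} * B^{1/p}, which in turn is at most A*z + 2*A^{1/q}*B^{1/p}. -/

import Mathlib

theorem inf_lambda_bound (z A B p q : ℝ) (hz : 0 < z) (hA : 0 < A) (hB : 0 < B)
    (hp : 1 < p) (hq : 1 < q) (hpq : 1 / p + 1 / q = 1) :
    sInf ((fun l => A * l + B / l ^ (p / q)) '' Set.Ici z) ≤
        A * z + p ^ (1 / p) * q ^ (1 / q) * A ^ (1 / q) * B ^ (1 / p) ∧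
      A * z + p ^ (1 / p) * q ^ (1 / q) * A ^ (1 / q) * B ^ (1 / p) ≤
        A * z + 2 * A ^ (1 / q) * B ^ (1 / p) := by
  have hp0 : (0:ℝ) < p := by linarith
  have hq0 : (0:ℝ) < q := by linarith
  have hpq' : p + q = p * q := by field_simp at hpq; linarith
  constructor
  · -- first inequality: evaluate at l₀ = z + c, c = (p*B/(q*A))^(1/p)
    set x : ℝ := p * B / (q * A) with hxdef
    have hx : 0 < x := by positivity
    set c : ℝ := x ^ (1 / p) with hcdef
    have hc : 0 < c := Real.rpow_pos_of_pos hx _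
    have hl0 : z + c ∈ Set.Ici z := by simp; linarith
    have hbdd : BddBelow ((fun l => A * l + B / l ^ (p / q)) '' Set.Ici z) := by
      refine ⟨0, ?_⟩
      rintro y ⟨l, hl, rfl⟩
      have hl0 : 0 < l := lt_of_lt_of_le hz hl
      positivity
    refine le_trans (csInf_le hbdd ⟨z + c, hl0, rfl⟩) ?_
    -- key computation
    have hcpq : c ^ (p / q) = x ^ (1 / q) := by
      rw [hcdef, ← Real.rpow_mul hx.le]
      congr 1
      field_simp
    have hmono : x ^ (1 / q) ≤ (z + c) ^ (p / q) := by
      rw [← hcpq]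
      exact Real.rpow_le_rpow hc.le (by linarith) (by positivity)
    have hstep : A * (z + c) + B / (z + c) ^ (p / q) ≤ A * z + (A * c + B / x ^ (1 / q)) := by
      have h1 : B / (z + c) ^ (p / q) ≤ B / x ^ (1 / q) :=
        div_le_div_of_nonneg_left hB.le (Real.rpow_pos_of_pos hx _) hmono
      linarith
    refine le_trans hstep ?_
    have key : A * c + B / x ^ (1 / q) = p ^ (1 / p) * q ^ (1 / q) * A ^ (1 / q) * B ^ (1 / p) := by
      have hxp : x ^ (1 / p) = p ^ (1 / p) * B ^ (1 / p) / (q ^ (1 / p) * A ^ (1 / p)) := by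
        rw [hxdef, Real.div_rpow (by positivity) (by positivity),
          Real.mul_rpow hp0.le hB.le, Real.mul_rpow hq0.le hA.le]
      have hxq : x ^ (1 / q) = p ^ (1 / q) * B ^ (1 / q) / (q ^ (1 / q) * A ^ (1 / q)) := by
        rw [hxdef, Real.div_rpow (by positivity) (by positivity),
          Real.mul_rpow hp0.le hB.le, Real.mul_rpow hq0.le hA.le]
      have hAsplit : A ^ (1 / p) * A ^ (1 / q) = A := by
        rw [← Real.rpow_add hA, hpq, Real.rpow_one]
      have hBsplit : B ^ (1 / p) * B ^ (1 / q) = B := by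
        rw [← Real.rpow_add hB, hpq, Real.rpow_one]
      have hPsplit : p ^ (1 / p) * p ^ (1 / q) = p := by
        rw [← Real.rpow_add hp0, hpq, Real.rpow_one]
      have hQsplit : q ^ (1 / p) * q ^ (1 / q) = q := by
        rw [← Real.rpow_add hq0, hpq, Real.rpow_one]
      rw [hcdef, hxp, hxq]
      have pp : (0:ℝ) < p ^ (1 / p) := Real.rpow_pos_of_pos hp0 _
      have pq' : (0:ℝ) < p ^ (1 / q) := Real.rpow_pos_of_pos hp0 _
      have qp : (0:ℝ) < q ^ (1 / p) := Real.rpow_pos_of_pos hq0 _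
      have qq : (0:ℝ) < q ^ (1 / q) := Real.rpow_pos_of_pos hq0 _
      have ap : (0:ℝ) < A ^ (1 / p) := Real.rpow_pos_of_pos hA _
      have aq : (0:ℝ) < A ^ (1 / q) := Real.rpow_pos_of_pos hA _
      have bp : (0:ℝ) < B ^ (1 / p) := Real.rpow_pos_of_pos hB _
      have bq : (0:ℝ) < B ^ (1 / q) := Real.rpow_pos_of_pos hB _
      have e1 : A * (p ^ (1/p) * B ^ (1/p)) * (p ^ (1/q) * B ^ (1/q)) = A * p * B := by
        calc A * (p ^ (1/p) * B ^ (1/p)) * (p ^ (1/q) * B ^ (1/q))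
            = A * (p ^ (1/p) * p ^ (1/q)) * (B ^ (1/p) * B ^ (1/q)) := by ring
          _ = A * p * B := by rw [hPsplit, hBsplit]
      have e2 : B * (q ^ (1/q) * A ^ (1/q)) * (q ^ (1/p) * A ^ (1/p)) = B * q * A := by
        calc B * (q ^ (1/q) * A ^ (1/q)) * (q ^ (1/p) * A ^ (1/p))
            = B * (q ^ (1/p) * q ^ (1/q)) * (A ^ (1/p) * A ^ (1/q)) := by ring
          _ = B * q * A := by rw [hQsplit, hAsplit]
      have e3 : p ^ (1/p) * q ^ (1/q) * A ^ (1/q) * B ^ (1/p) *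
          (q ^ (1/p) * A ^ (1/p) * (p ^ (1/q) * B ^ (1/q))) = p * q * A * B := by
        calc p ^ (1/p) * q ^ (1/q) * A ^ (1/q) * B ^ (1/p) *
            (q ^ (1/p) * A ^ (1/p) * (p ^ (1/q) * B ^ (1/q)))
            = p ^ (1/p) * p ^ (1/q) * (q ^ (1/p) * q ^ (1/q)) *
              (A ^ (1/p) * A ^ (1/q)) * (B ^ (1/p) * B ^ (1/q)) := by ring
          _ = p * q * A * B := by rw [hPsplit, hQsplit, hAsplit, hBsplit]
      field_simp
      linear_combination e1 + e2 - e3 + A * B * hpq'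
    linarith [key.le]
  · -- second inequality: Young gives p^(1/p) * q^(1/q) ≤ 2
    have hconj : p.HolderConjugate q := Real.holderConjugate_iff.mpr ⟨hp, by rw [← one_div, ← one_div]; exact hpq⟩
    have hy := Real.young_inequality (p ^ (1 / p)) (q ^ (1 / q)) hconj
    have pp : (0:ℝ) < p ^ (1 / p) := Real.rpow_pos_of_pos hp0 _
    have qq : (0:ℝ) < q ^ (1 / q) := Real.rpow_pos_of_pos hq0 _
    rw [abs_of_pos pp, abs_of_pos qq] at hy
    have h1 : (p ^ (1 / p)) ^ p = p := by
      rw [← Real.rpow_mul hp0.le, one_div_mul_cancel (ne_of_gt hp0), Real.rpow_one]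
    have h2 : (q ^ (1 / q)) ^ q = q := by
      rw [← Real.rpow_mul hq0.le, one_div_mul_cancel (ne_of_gt hq0), Real.rpow_one]
    rw [h1, h2, div_self (ne_of_gt hp0), div_self (ne_of_gt hq0)] at hy
    have aq : (0:ℝ) < A ^ (1 / q) := Real.rpow_pos_of_pos hA _
    have bp : (0:ℝ) < B ^ (1 / p) := Real.rpow_pos_of_pos hB _
    nlinarith [mul_pos aq bp]
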